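/- The eigenvalue 1 of T is simple, i.e., the eigenspace of T for eigenvalue 1 is one-dimensional and is spanned by the vector π with π_k = e^{−2εk}; moreover every complex eigenvalue λ of T with λ ≠ 1 satisfies |λ| ≤ 2/z < 1. -/

import Mathlib

open Real Matrix Finset

/-- The TSAC transition matrix `T` on the diagonal of the computation-qubit density
matrix: `N = 2^n`, `z = e^ε + e^{-ε}`, `T 0 0 = T 0 1 = e^ε/z`,
`T (N-1) (N-2) = T (N-1) (N-1) = e^{-ε}/z`, and for `0 < i < N-1`,
`T i (i-1) = e^{-ε}/z`, `T i (i+1) = e^ε/z`; all other entries vanish. -/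
noncomputable def Tmat (n : ℕ) (ε : ℝ) : Matrix (Fin (2 ^ n)) (Fin (2 ^ n)) ℝ :=
  fun i j =>
    if (i : ℕ) = 0 then
      if (j : ℕ) ≤ 1 then Real.exp ε / (Real.exp ε + Real.exp (-ε)) else 0
    else if (i : ℕ) = 2 ^ n - 1 then
      if 2 ^ n - 2 ≤ (j : ℕ) then Real.exp (-ε) / (Real.exp ε + Real.exp (-ε)) else 0
    else if (j : ℕ) + 1 = (i : ℕ) then Real.exp (-ε) / (Real.exp ε + Real.exp (-ε))
    else if (j : ℕ) = (i : ℕ) + 1 then Real.exp ε / (Real.exp ε + Real.exp (-ε))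
    else 0

lemma sum_support_pair {K : Type*} [AddCommMonoid K] {N : ℕ} (f : Fin N → K) (a b : Fin N)
    (hab : a ≠ b) (h : ∀ j, j ≠ a → j ≠ b → f j = 0) : ∑ j, f j = f a + f b := by
  rw [← Finset.sum_pair hab]
  refine (Finset.sum_subset (Finset.subset_univ _) ?_).symm
  intro j _ hj
  simp only [Finset.mem_insert, Finset.mem_singleton, not_or] at hj
  exact h j hj.1 hj.2

section rows
variable {K : Type*} [CommRing K] (φ : ℝ →+* K) {n : ℕ} (ε : ℝ)
  (x : Fin (2 ^ n) → K)

lemma row_zero (hN : 2 ≤ 2 ^ n) :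
    (((Tmat n ε).map (φ : ℝ →+* K)) *ᵥ x) ⟨0, by omega⟩ =
      φ (Real.exp ε / (Real.exp ε + Real.exp (-ε))) * (x ⟨0, by omega⟩ + x ⟨1, by omega⟩) := by
  have e00 : Tmat n ε ⟨0, by omega⟩ ⟨0, by omega⟩ = Real.exp ε / (Real.exp ε + Real.exp (-ε)) := by
    simp only [Tmat]; rw [if_pos, if_pos] <;> first | trivial | omega
  have e01 : Tmat n ε ⟨0, by omega⟩ ⟨1, by omega⟩ = Real.exp ε / (Real.exp ε + Real.exp (-ε)) := by
    simp only [Tmat]; rw [if_pos, if_pos] <;> first | trivial | omega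
  have := sum_support_pair (fun j => ((Tmat n ε).map φ) ⟨0, by omega⟩ j * x j)
    ⟨0, by omega⟩ ⟨1, by omega⟩ (by simp [Fin.ext_iff])
    (by
      intro j hj0 hj1
      have h0 : (j : ℕ) ≠ 0 := fun h => hj0 (Fin.ext h)
      have h1 : (j : ℕ) ≠ 1 := fun h => hj1 (Fin.ext h)
      have : Tmat n ε ⟨0, by omega⟩ j = 0 := by
        simp only [Tmat]; rw [if_pos, if_neg] <;> first | trivial | omega
      simp only [Matrix.map_apply, this, map_zero, zero_mul])
  simp only [Matrix.mulVec, dotProduct] at this ⊢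
  rw [this]
  simp only [Matrix.map_apply, e00, e01]
  ring

lemma row_last (hN : 2 ≤ 2 ^ n) :
    (((Tmat n ε).map (φ : ℝ →+* K)) *ᵥ x) ⟨2 ^ n - 1, by omega⟩ =
      φ (Real.exp (-ε) / (Real.exp ε + Real.exp (-ε))) *
        (x ⟨2 ^ n - 2, by omega⟩ + x ⟨2 ^ n - 1, by omega⟩) := by
  have e00 : Tmat n ε ⟨2 ^ n - 1, by omega⟩ ⟨2 ^ n - 2, by omega⟩ =
      Real.exp (-ε) / (Real.exp ε + Real.exp (-ε)) := by
    simp only [Tmat]; rw [if_neg, if_pos, if_pos] <;> first | trivial | omega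
  have e01 : Tmat n ε ⟨2 ^ n - 1, by omega⟩ ⟨2 ^ n - 1, by omega⟩ =
      Real.exp (-ε) / (Real.exp ε + Real.exp (-ε)) := by
    simp only [Tmat]; rw [if_neg, if_pos, if_pos] <;> first | trivial | omega
  have := sum_support_pair (fun j => ((Tmat n ε).map φ) ⟨2 ^ n - 1, by omega⟩ j * x j)
    ⟨2 ^ n - 2, by omega⟩ ⟨2 ^ n - 1, by omega⟩ (by simp only [ne_eq, Fin.mk.injEq]; omega)
    (by
      intro j hj0 hj1
      have h0 : (j : ℕ) ≠ 2 ^ n - 2 := fun h => hj0 (Fin.ext h)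
      have h1 : (j : ℕ) ≠ 2 ^ n - 1 := fun h => hj1 (Fin.ext h)
      have hjlt : (j : ℕ) < 2 ^ n := j.isLt
      have : Tmat n ε ⟨2 ^ n - 1, by omega⟩ j = 0 := by
        simp only [Tmat]; rw [if_neg, if_pos, if_neg] <;> first | trivial | omega
      simp [Matrix.map_apply, this])
  simp only [Matrix.mulVec, dotProduct] at this ⊢
  rw [this]
  simp only [Matrix.map_apply, e00, e01]
  ring

lemma row_mid (i : ℕ) (h0 : 0 < i) (h1 : i < 2 ^ n - 1) :
    (((Tmat n ε).map (φ : ℝ →+* K)) *ᵥ x) ⟨i, by omega⟩ =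
      φ (Real.exp (-ε) / (Real.exp ε + Real.exp (-ε))) * x ⟨i - 1, by omega⟩ +
      φ (Real.exp ε / (Real.exp ε + Real.exp (-ε))) * x ⟨i + 1, by omega⟩ := by
  have e00 : Tmat n ε ⟨i, by omega⟩ ⟨i - 1, by omega⟩ =
      Real.exp (-ε) / (Real.exp ε + Real.exp (-ε)) := by
    simp only [Tmat]; rw [if_neg, if_neg, if_pos] <;> first | trivial | omega
  have e01 : Tmat n ε ⟨i, by omega⟩ ⟨i + 1, by omega⟩ =
      Real.exp ε / (Real.exp ε + Real.exp (-ε)) := by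
    simp only [Tmat]; rw [if_neg, if_neg, if_neg] <;> first | trivial | omega
  have := sum_support_pair (fun j => ((Tmat n ε).map φ) ⟨i, by omega⟩ j * x j)
    ⟨i - 1, by omega⟩ ⟨i + 1, by omega⟩ (by simp only [ne_eq, Fin.mk.injEq]; omega)
    (by
      intro j hj0 hj1
      have h0' : (j : ℕ) ≠ i - 1 := fun h => hj0 (Fin.ext h)
      have h1' : (j : ℕ) ≠ i + 1 := fun h => hj1 (Fin.ext h)
      have : Tmat n ε ⟨i, by omega⟩ j = 0 := by
        simp only [Tmat]; rw [if_neg, if_neg, if_neg, if_neg] <;> first | trivial | omega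
      simp [Matrix.map_apply, this])
  simp only [Matrix.mulVec, dotProduct] at this ⊢
  rw [this]
  simp only [Matrix.map_apply, e00, e01]

end rows

section part1
variable {n : ℕ} {ε : ℝ}

lemma exp_pow (ε : ℝ) (m : ℕ) : Real.exp (-2 * ε * m) = Real.exp (-ε) ^ (2 * m) := by
  rw [← Real.exp_nat_mul]; congr 1; push_cast; ring

lemma hmap_id (n : ℕ) (ε : ℝ) : (Tmat n ε).map ⇑(RingHom.id ℝ) = Tmat n ε := by
  ext i j; simp

lemma aux_pi_eig (hN : 2 ≤ 2 ^ n) (hε : 0 < ε) :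
    (Tmat n ε) *ᵥ (fun k : Fin (2 ^ n) => Real.exp (-2 * ε * (k : ℕ))) =
      (fun k : Fin (2 ^ n) => Real.exp (-2 * ε * (k : ℕ))) := by
  have he := Real.exp_pos ε
  have he' := Real.exp_pos (-ε)
  have hee' : Real.exp ε * Real.exp (-ε) = 1 := by
    rw [← Real.exp_add]; simp
  have hz : (0:ℝ) < Real.exp ε + Real.exp (-ε) := by positivity
  set pi : Fin (2 ^ n) → ℝ := fun k : Fin (2 ^ n) => Real.exp (-2 * ε * (k : ℕ)) with hpi
  funext k
  obtain ⟨kv, hk⟩ := k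
  rcases eq_or_ne kv 0 with rfl | hkv0
  · have h := row_zero (RingHom.id ℝ) ε pi hN
    rw [hmap_id] at h
    simp only [RingHom.id_apply] at h
    rw [h]
    simp only [hpi, exp_pow]
    norm_num
    field_simp
    linear_combination Real.exp (-ε) * hee'
  rcases eq_or_ne kv (2 ^ n - 1) with rfl | hkvl
  · have h := row_last (RingHom.id ℝ) ε pi hN
    rw [hmap_id] at h
    simp only [RingHom.id_apply] at h
    rw [h]
    simp only [hpi, exp_pow]
    have h2 : 2 * (2 ^ n - 1) = 2 * (2 ^ n - 2) + 2 := by omega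
    rw [h2, pow_add]
    rw [div_mul_eq_mul_div, div_eq_iff hz.ne']
    ring_nf
    linear_combination (-(Real.exp (-ε) * Real.exp (-ε) ^ ((2 ^ n - 2) * 2))) * hee'
  · have hmid : 0 < kv ∧ kv < 2 ^ n - 1 := by omega
    have h := row_mid (RingHom.id ℝ) ε pi kv hmid.1 hmid.2
    rw [hmap_id] at h
    simp only [RingHom.id_apply] at h
    rw [h]
    simp only [hpi, exp_pow]
    have h1 : 2 * kv = 2 * (kv - 1) + 2 := by omega
    have h2 : 2 * (kv + 1) = 2 * (kv - 1) + 4 := by omega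
    rw [h1, h2, pow_add, pow_add]
    rw [div_mul_eq_mul_div, div_mul_eq_mul_div, ← add_div, div_eq_iff hz.ne']
    ring_nf
    linear_combination (Real.exp (-ε) ^ (2 * (kv - 1) + 1) * (Real.exp (-ε) ^ 2 - 1)) * hee'
end part1

lemma aux_unique {n : ℕ} {ε : ℝ} (hN : 2 ≤ 2 ^ n) (hε : 0 < ε) (x : Fin (2 ^ n) → ℝ)
    (hx : Tmat n ε *ᵥ x = x) :
    x = fun k : Fin (2 ^ n) => Real.exp (-2 * ε * (k : ℕ)) * x ⟨0, by omega⟩ := by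
  have he := Real.exp_pos ε
  have he' := Real.exp_pos (-ε)
  have hee' : Real.exp ε * Real.exp (-ε) = 1 := by rw [← Real.exp_add]; simp
  have hz : (0:ℝ) < Real.exp ε + Real.exp (-ε) := by positivity
  have claim : ∀ m, ∀ hm : m < 2 ^ n,
      x ⟨m, hm⟩ = Real.exp (-ε) ^ (2 * m) * x ⟨0, by omega⟩ := by
    intro m
    induction m using Nat.strong_induction_on with
    | _ m ih =>
      match m with
      | 0 => intro hm; simp
      | 1 =>
        intro hm
        have h0 : (Tmat n ε *ᵥ x) ⟨0, by omega⟩ = x ⟨0, by omega⟩ := congrFun hx _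
        have hr := row_zero (RingHom.id ℝ) ε x hN
        rw [hmap_id] at hr
        simp only [RingHom.id_apply] at hr
        rw [hr] at h0
        field_simp at h0
        linear_combination Real.exp (-ε) * h0 - x ⟨1, hm⟩ * hee'
      | (m+2) =>
        intro hm
        have h0 : (Tmat n ε *ᵥ x) ⟨m+1, by omega⟩ = x ⟨m+1, by omega⟩ := congrFun hx _
        have hr := row_mid (RingHom.id ℝ) ε x (m+1) (by omega) (by omega)
        rw [hmap_id] at hr
        simp only [RingHom.id_apply, Nat.add_sub_cancel] at hr
        rw [hr] at h0
        rw [ih m (by omega) (by omega), ih (m+1) (by omega) (by omega)] at h0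
        field_simp at h0
        have h4 : 2 * (m + 2) = 2 * m + 4 := by omega
        have h1 : 2 * (m + 1) = 2 * m + 2 := by omega
        rw [h4]
        linear_combination Real.exp (-ε) * h0 +
          (Real.exp (-ε) ^ (2*m+2) * x ⟨0, by omega⟩ - x ⟨m+2, hm⟩) * hee'
  funext k
  obtain ⟨kv, hk⟩ := k
  rw [claim kv hk]
  rw [exp_pow]

theorem main_part12 (n : ℕ) (hn : 1 ≤ n) (ε : ℝ) (hε : 0 < ε) :
    Module.End.eigenspace (Matrix.toLin' (Tmat n ε)) 1 =
        Submodule.span ℝ {fun k : Fin (2 ^ n) => Real.exp (-2 * ε * (k : ℕ))} ∧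
    Module.finrank ℝ (Module.End.eigenspace (Matrix.toLin' (Tmat n ε)) 1) = 1 := by
  have hN : 2 ≤ 2 ^ n := by
    calc 2 = 2 ^ 1 := rfl
    _ ≤ 2 ^ n := Nat.pow_le_pow_right (by norm_num) hn
  set pi : Fin (2 ^ n) → ℝ := fun k : Fin (2 ^ n) => Real.exp (-2 * ε * (k : ℕ)) with hpi
  have hpine : pi ≠ 0 := by
    intro h
    have : pi ⟨0, by omega⟩ = 0 := by rw [h]; rfl
    simp only [hpi] at this
    norm_num at this

  have heq : Module.End.eigenspace (Matrix.toLin' (Tmat n ε)) 1 = Submodule.span ℝ {pi} := by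
    apply le_antisymm
    · intro x hx
      rw [Module.End.mem_eigenspace_iff, Matrix.toLin'_apply, one_smul] at hx
      have := aux_unique hN hε x hx
      rw [Submodule.mem_span_singleton]
      refine ⟨x ⟨0, by omega⟩, ?_⟩
      rw [this]
      funext k
      simp [hpi, mul_comm]
    · rw [Submodule.span_le, Set.singleton_subset_iff]
      rw [SetLike.mem_coe, Module.End.mem_eigenspace_iff, Matrix.toLin'_apply, one_smul]
      exact aux_pi_eig hN hε
  exact ⟨heq, by rw [heq]; exact finrank_span_singleton hpine⟩

set_option maxHeartbeats 2000000 in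
lemma no_eigvec {n : ℕ} {ε : ℝ} (hN : 2 ≤ 2 ^ n) (hε : 0 < ε) (lam r s : ℂ)
    (x : Fin (2 ^ n) → ℂ)
    (hx : ((Tmat n ε).map (algebraMap ℝ ℂ)) *ᵥ x = lam • x)
    (hxne : x ≠ 0)
    (hrs : r * s = 1)
    (hsum : r + s = (Real.exp ε + Real.exp (-ε) : ℂ) * lam)
    (habs : 1 < ‖r‖)
    (hlam : lam ≠ 1) : False := by
  have he := Real.exp_pos ε
  have he' := Real.exp_pos (-ε)
  have hee' : Real.exp ε * Real.exp (-ε) = 1 := by rw [← Real.exp_add]; simp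
  set eC : ℂ := (Real.exp ε : ℂ) with heC
  set e'C : ℂ := (Real.exp (-ε) : ℂ) with he'C
  have heeC : eC * e'C = 1 := by
    rw [heC, he'C, ← Complex.ofReal_mul, hee', Complex.ofReal_one]
  have heCne : eC ≠ 0 := by simp [heC]
  have he'Cne : e'C ≠ 0 := by simp [he'C]
  have hzCne : eC + e'C ≠ 0 := by
    rw [heC, he'C, ← Complex.ofReal_add, Complex.ofReal_ne_zero]
    positivity
  have hr0 : r ≠ 0 := by
    intro h; rw [h, norm_zero] at habs; linarith
  have hs0 : s ≠ 0 := by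
    intro h; rw [h, mul_zero] at hrs; exact one_ne_zero hrs.symm
  have habs_s : ‖s‖ < 1 := by
    have h1 : ‖r‖ * ‖s‖ = 1 := by
      rw [← norm_mul, hrs, norm_one]
    nlinarith [norm_nonneg s]
  have hrsne : r - s ≠ 0 := by
    intro h
    rw [sub_eq_zero.mp h] at habs
    linarith
  -- cast helpers
  have hcast1 : (algebraMap ℝ ℂ) (Real.exp ε / (Real.exp ε + Real.exp (-ε))) = eC / (eC + e'C) := by
    rw [heC, he'C, ← Complex.ofReal_add, ← Complex.ofReal_div]
    rfl
  have hcast2 : (algebraMap ℝ ℂ) (Real.exp (-ε) / (Real.exp ε + Real.exp (-ε))) = e'C / (eC + e'C) := by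
    rw [heC, he'C, ← Complex.ofReal_add, ← Complex.ofReal_div]
    rfl
  have hx' : ∀ i : Fin (2 ^ n), ((Tmat n ε).map (algebraMap ℝ ℂ) *ᵥ x) i = lam * x i := by
    intro i; rw [hx]; simp
  -- cleared row equations
  have heq0 : eC * (x ⟨0, by omega⟩ + x ⟨1, by omega⟩) = (r + s) * x ⟨0, by omega⟩ := by
    have h := row_zero (algebraMap ℝ ℂ) ε x hN
    rw [hx' _, hcast1, div_mul_eq_mul_div, eq_div_iff hzCne] at h
    linear_combination (-1 : ℂ) * h - x ⟨0, by omega⟩ * hsum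
  have heqlast : e'C * (x ⟨2 ^ n - 2, by omega⟩ + x ⟨2 ^ n - 1, by omega⟩)
      = (r + s) * x ⟨2 ^ n - 1, by omega⟩ := by
    have h := row_last (algebraMap ℝ ℂ) ε x hN
    rw [hx' _, hcast2, div_mul_eq_mul_div, eq_div_iff hzCne] at h
    linear_combination (-1 : ℂ) * h - x ⟨2 ^ n - 1, by omega⟩ * hsum
  have heqmid : ∀ i : ℕ, ∀ h0 : 0 < i, ∀ h1 : i < 2 ^ n - 1,
      e'C * x ⟨i - 1, by omega⟩ + eC * x ⟨i + 1, by omega⟩ = (r + s) * x ⟨i, by omega⟩ := by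
    intro i hi0 hi1
    have h := row_mid (algebraMap ℝ ℂ) ε x i hi0 hi1
    rw [hx' _, hcast1, hcast2, div_mul_eq_mul_div, div_mul_eq_mul_div,
      ← add_div, eq_div_iff hzCne] at h
    linear_combination (-1 : ℂ) * h - x ⟨i, by omega⟩ * hsum
  -- closed form
  have claim : ∀ m, ∀ hm : m < 2 ^ n,
      (r - s) * eC ^ m * x ⟨m, hm⟩ =
        x ⟨0, by omega⟩ * ((r - eC) * r ^ m + (eC - s) * s ^ m) := by
    intro m
    induction m using Nat.strong_induction_on with
    | _ m ih =>
      match m with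
      | 0 => intro hm; simp; ring
      | 1 =>
        intro hm
        linear_combination (r - s) * heq0
      | (m+2) =>
        intro hm
        have hmid2 := heqmid (m+1) (by omega) (by omega)
        simp only [Nat.add_sub_cancel] at hmid2
        have ih0 := ih m (by omega) (by omega)
        have ih1 := ih (m+1) (by omega) (by omega)
        linear_combination ((r - s) * eC ^ (m+1)) * hmid2 + (r + s) * ih1 - ih0
          - ((r - s) * eC ^ m * x ⟨m, by omega⟩) * heeC
          + (x ⟨0, by omega⟩ * ((r - eC) * r ^ m + (eC - s) * s ^ m)) * hrs
  -- last row contradiction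
  obtain ⟨M, hM⟩ : ∃ M, 2 ^ n = M + 2 := ⟨2 ^ n - 2, by omega⟩
  have hA := claim M (by omega)
  have hB := claim (M + 1) (by omega)
  have e1 : (⟨2 ^ n - 2, by omega⟩ : Fin (2 ^ n)) = ⟨M, by omega⟩ := Fin.ext (by simp; omega)
  have e2 : (⟨2 ^ n - 1, by omega⟩ : Fin (2 ^ n)) = ⟨M + 1, by omega⟩ := Fin.ext (by simp; omega)
  rw [e1, e2] at heqlast
  have hD : x ⟨0, by omega⟩ *
      ((r - eC) * (e'C - r) * r ^ (M+1) + (eC - s) * (e'C - s) * s ^ (M+1)) = 0 := by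
    linear_combination ((r - s) * eC ^ (M+1)) * heqlast - hA + ((r + s) - e'C) * hB
      - ((r - s) * eC ^ M * x ⟨M, by omega⟩) * heeC
      + (x ⟨0, by omega⟩ * ((r - eC) * r ^ M + (eC - s) * s ^ M)) * hrs
  have hp : (r * s) ^ (M+1) = 1 := by rw [hrs, one_pow]
  have hfac : ((r - eC) * (e'C - r) * r ^ (M+1) + (eC - s) * (e'C - s) * s ^ (M+1)) * r ^ (M+3)
      = (r - eC) * (r - e'C) * (1 - r ^ (2*M+4)) := by
    linear_combination ((eC - s) * (e'C - s) * r ^ 2) * hp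
      + (s * r + 1 - (eC + e'C) * r) * hrs + (r ^ 2 - 1) * heeC
  have h1 : r ≠ eC := by
    intro h
    have hs : s = e'C := by
      apply mul_left_cancel₀ heCne
      rw [heeC, ← h, hrs]
    rw [h, hs] at hsum
    have : lam = 1 := by
      apply mul_left_cancel₀ hzCne
      rw [mul_one, ← hsum]
    exact hlam this
  have h2 : r ≠ e'C := by
    intro h
    have : ‖e'C‖ < 1 := by
      rw [he'C, Complex.norm_real, Real.norm_of_nonneg he'.le]
      calc Real.exp (-ε) < Real.exp 0 := Real.exp_lt_exp.mpr (by linarith)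
      _ = 1 := Real.exp_zero
    rw [h] at habs; linarith
  have h3 : r ^ (2*M+4) ≠ 1 := by
    intro h
    have : ‖r ^ (2*M+4)‖ = 1 := by rw [h, norm_one]
    rw [norm_pow] at this
    have : 1 < ‖r‖ ^ (2*M+4) := one_lt_pow₀ habs (by omega)
    linarith
  have hDne : ((r - eC) * (e'C - r) * r ^ (M+1) + (eC - s) * (e'C - s) * s ^ (M+1)) ≠ 0 := by
    intro h
    rw [h, zero_mul] at hfac
    exact (mul_ne_zero (mul_ne_zero (sub_ne_zero.mpr h1) (sub_ne_zero.mpr h2))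
      (sub_ne_zero.mpr (Ne.symm h3))) hfac.symm
  have hx0 : x ⟨0, by omega⟩ = 0 := by
    rw [mul_eq_zero] at hD
    exact hD.resolve_right hDne
  apply hxne
  funext k
  obtain ⟨kv, hk⟩ := k
  have hcl := claim kv hk
  rw [hx0, zero_mul] at hcl
  rw [mul_eq_zero] at hcl
  have := hcl.resolve_left (mul_ne_zero hrsne (pow_ne_zero _ heCne))
  simpa using this

theorem main_part3 (n : ℕ) (hn : 1 ≤ n) (ε : ℝ) (hε : 0 < ε) (lam : ℂ)
    (hmem : lam ∈ spectrum ℂ ((Tmat n ε).map (algebraMap ℝ ℂ))) (hlam : lam ≠ 1) :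
    ‖lam‖ ≤ 2 / (Real.exp ε + Real.exp (-ε)) := by
  have hN : 2 ≤ 2 ^ n := by
    calc 2 = 2 ^ 1 := rfl
    _ ≤ 2 ^ n := Nat.pow_le_pow_right (by norm_num) hn
  have he := Real.exp_pos ε
  have he' := Real.exp_pos (-ε)
  have hz : (0:ℝ) < Real.exp ε + Real.exp (-ε) := by positivity
  by_contra hc
  push_neg at hc
  -- eigenvector
  obtain ⟨x, hxne, hxeq⟩ : ∃ v : Fin (2 ^ n) → ℂ, v ≠ 0 ∧
      ((Tmat n ε).map (algebraMap ℝ ℂ)) *ᵥ v = lam • v := by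
    rw [← AlgEquiv.spectrum_eq (Matrix.toLinAlgEquiv <| Pi.basisFun ℂ (Fin (2 ^ n))),
      ← Module.End.hasEigenvalue_iff_mem_spectrum] at hmem
    obtain ⟨v, hv⟩ := hmem.exists_hasEigenvector
    refine ⟨v, hv.2, ?_⟩
    have := hv.apply_eq_smul
    rw [show ((Matrix.toLinAlgEquiv (Pi.basisFun ℂ (Fin (2 ^ n))))
        ((Tmat n ε).map (algebraMap ℝ ℂ))) = Matrix.toLin' ((Tmat n ε).map (algebraMap ℝ ℂ))
        from rfl, Matrix.toLin'_apply] at this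
    exact this
  have habsμ : 2 < ‖((Real.exp ε : ℂ) + (Real.exp (-ε) : ℂ)) * lam‖ := by
    rw [norm_mul, ← Complex.ofReal_add, Complex.norm_real, Real.norm_of_nonneg hz.le]
    rw [div_lt_iff₀ hz] at hc
    linarith [hc]
  obtain ⟨d, hd⟩ := IsAlgClosed.exists_pow_nat_eq
    ((((Real.exp ε : ℂ) + (Real.exp (-ε) : ℂ)) * lam) ^ 2 - 4) (n := 2) (by norm_num)
  set μ : ℂ := ((Real.exp ε : ℂ) + (Real.exp (-ε) : ℂ)) * lam with hμ
  have hsum12 : (μ + d) / 2 + (μ - d) / 2 = μ := by ring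
  have hprod : (μ + d) / 2 * ((μ - d) / 2) = 1 := by linear_combination (-(1:ℂ)/4) * hd
  have habs12 : 1 < ‖(μ + d) / 2‖ ∨ 1 < ‖(μ - d) / 2‖ := by
    by_contra h
    push_neg at h
    obtain ⟨h1, h2⟩ := h
    have hpr : ‖(μ + d) / 2‖ * ‖(μ - d) / 2‖ = 1 := by
      rw [← norm_mul, hprod, norm_one]
    have hsu : ‖μ‖ ≤ ‖(μ + d) / 2‖ + ‖(μ - d) / 2‖ := by
      calc ‖μ‖ = ‖(μ + d) / 2 + (μ - d) / 2‖ := by rw [hsum12]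
      _ ≤ _ := norm_add_le _ _
    nlinarith [norm_nonneg ((μ + d) / 2), norm_nonneg ((μ - d) / 2)]
  rcases habs12 with h | h
  · exact no_eigvec hN hε lam ((μ + d) / 2) ((μ - d) / 2) x hxeq hxne hprod
      (by rw [hsum12]) h hlam
  · exact no_eigvec hN hε lam ((μ - d) / 2) ((μ + d) / 2) x hxeq hxne
      (by linear_combination hprod) (by rw [add_comm, hsum12]) h hlam

/-- The eigenvalue `1` of `T` is simple: the eigenspace of `T` for eigenvalue `1`
is one-dimensional and spanned by `π` with `π k = e^{-2εk}`; moreover every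
complex eigenvalue `λ ≠ 1` of `T` satisfies `|λ| ≤ 2/z < 1`. -/
theorem tsac_eigenvalue_one_simple (n : ℕ) (hn : 1 ≤ n) (ε : ℝ) (hε : 0 < ε) :
    Module.End.eigenspace (Matrix.toLin' (Tmat n ε)) 1 =
        Submodule.span ℝ {fun k : Fin (2 ^ n) => Real.exp (-2 * ε * (k : ℕ))} ∧
    Module.finrank ℝ (Module.End.eigenspace (Matrix.toLin' (Tmat n ε)) 1) = 1 ∧
    (∀ lam : ℂ, lam ∈ spectrum ℂ ((Tmat n ε).map (algebraMap ℝ ℂ)) → lam ≠ 1 →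
      ‖lam‖ ≤ 2 / (Real.exp ε + Real.exp (-ε))) ∧
    2 / (Real.exp ε + Real.exp (-ε)) < 1 := by
  refine ⟨(main_part12 n hn ε hε).1, (main_part12 n hn ε hε).2,
    fun lam hmem hlam => main_part3 n hn ε hε lam hmem hlam, ?_⟩
  have he := Real.exp_pos ε
  have he' := Real.exp_pos (-ε)
  have hz : (0:ℝ) < Real.exp ε + Real.exp (-ε) := by positivity
  rw [div_lt_one hz]
  have h1 : 1 < Real.exp ε := by
    calc 1 = Real.exp 0 := Real.exp_zero.symm
    _ < Real.exp ε := Real.exp_lt_exp.mpr hε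
  have h2 : Real.exp (-ε) = (Real.exp ε)⁻¹ := Real.exp_neg ε
  rw [h2]
  have h3 : 0 < (Real.exp ε - 1) * (Real.exp ε - 1) :=
    mul_pos (by linarith) (by linarith)
  nlinarith [h3, he, mul_inv_cancel₀ he.ne']
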